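/- For all x ≥ 1, the following chain of step-downs with parameter x+2 holds: ω_{x+3} = ω^{ω_{x+2}} >_{x+2} ω^{ω_{x+1}+1} >_{x+2} ω^{ω_{x+1}}·3 >_{x+2} ω_{x+2}·2 + 1, where ω_n denotes the tower ω_0 = 1, ω_{n+1} = ω^{ω_n}. -/

import Mathlib

namespace SlowCon

open ONote

/-- Fast-growing hierarchy with `F_{α+1}(n) = F_α^[n+1](n)`, standard fundamental sequences. -/
def F : ONote → ℕ → ℕ
  | o =>
    match fundamentalSequence o, fundamentalSequence_has_prop o with
    | Sum.inl none, _ => fun n => n + 1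
    | Sum.inl (some a), h =>
      have : a < o := by rw [ONote.lt_def, h.1]; exact Order.lt_succ _
      fun n => (F a)^[n + 1] n
    | Sum.inr f, h => fun n =>
      have : f n < o := (h.2.1 n).2.1
      F (f n) n
  termination_by o => o

/-- The `k`-th member of the fundamental sequence (predecessor at successors, `0` at `0`). -/
def fs (o : ONote) (k : ℕ) : ONote :=
  match fundamentalSequence o with
  | Sum.inl none => 0
  | Sum.inl (some a) => a
  | Sum.inr f => f k

/-- `stepDown k a b` : one can descend from `b` to `a` via `k`-th members of
fundamental sequences (at least one step). -/
def stepDown (k : ℕ) (a b : ONote) : Prop :=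
  Relation.TransGen (fun x y => y ≠ 0 ∧ x = fs y k) a b

/-- Tower of ω's: `wtower 0 = 1`, `wtower (n+1) = ω ^ wtower n`. -/
def wtower : ℕ → ONote
  | 0 => 1
  | n + 1 => ONote.oadd (wtower n) 1 0

/-- `F_{ε₀}(n) := F_{ω_{n+1}}(n)`. -/
def Feps (n : ℕ) : ℕ := F (wtower (n + 1)) n

/-- Ordinals `≤ ε₀`: `none` stands for `ε₀`, `some a` for `a < ε₀`. -/
def fsE : Option ONote → ℕ → Option ONote
  | none, k => some (wtower (k + 1))
  | some a, k => some (fs a k)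

/-- Step-down relation on ordinals `≤ ε₀` (with `{ε₀}(k) = ω_{k+1}`). -/
def stepDownE (k : ℕ) (a b : Option ONote) : Prop :=
  Relation.TransGen (fun x y => y ≠ some 0 ∧ x = fsE y k) a b

/-- Fast-growing hierarchy at indices `≤ ε₀`. -/
def FE : Option ONote → ℕ → ℕ
  | none, n => Feps n
  | some a, n => F a n

/-- Normal form for indices `≤ ε₀`. -/
def NFE : Option ONote → Prop
  | none => True
  | some a => a.NF

end SlowCon

namespace SlowCon

open ONote

/-- `iterRel G j x y` : `y` is obtained from `x` by `j` applications of the graph `G`. -/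
def iterRel (G : ℕ → ℕ → Prop) : ℕ → ℕ → ℕ → Prop
  | 0, x, y => y = x
  | j + 1, x, y => ∃ z, iterRel G j x z ∧ G z y

/-- Graph relation of the fast-growing hierarchy: `FRel α x y` means `F_α(x) = y`. -/
def FRel : ONote → ℕ → ℕ → Prop
  | o =>
    match fundamentalSequence o, fundamentalSequence_has_prop o with
    | Sum.inl none, _ => fun x y => y = x + 1
    | Sum.inl (some a), h =>
      have : a < o := by rw [ONote.lt_def, h.1]; exact Order.lt_succ _
      fun x y => iterRel (FRel a) (x + 1) x y
    | Sum.inr f, h => fun x y =>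
      have : f x < o := (h.2.1 x).2.1
      FRel (f x) x y
  termination_by o => o

/-- Graph relation for indices `≤ ε₀`, with `F_{ε₀}(x) = F_{ω_{x+1}}(x)`. -/
def FRelE : Option ONote → ℕ → ℕ → Prop
  | none, x, y => FRel (wtower (x + 1)) x y
  | some a, x, y => FRel a x y

/-- `OltE a b` : `a < b` among ordinals `≤ ε₀` (`none` = `ε₀`). -/
def OltE : Option ONote → Option ONote → Prop
  | some x, some y => x < y
  | some _, none => True
  | none, _ => False

/-- Finite levels of the fast-growing hierarchy. -/
def Ffin : ℕ → ℕ → ℕ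
  | 0 => fun m => m + 1
  | k + 1 => fun m => (Ffin k)^[m + 1] m

/-- `tower x α = ω_x^α` : `x`-fold exponential tower over `α`. -/
def tower : ℕ → ONote → ONote
  | 0, a => a
  | k + 1, a => ONote.oadd (tower k a) 1 0

/-- Progressiveness of a predicate on ordinal notations below ε₀. -/
def ProgO (Q : ONote → Prop) : Prop := ∀ a : ONote, (∀ b < a, Q b) → Q a

/-- Transfinite induction up to `α` for `Q`. -/
def TIO (α : ONote) (Q : ONote → Prop) : Prop := ProgO Q → ∀ β < α, Q β

open Classical in
/-- `FepsInv x` : the largest `z ≤ x` with `F_{ε₀}(z) ≤ x`, or `0` if there is none. -/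
noncomputable def FepsInv (x : ℕ) : ℕ :=
  ((Finset.range (x + 1)).filter fun z => Feps z ≤ x).sup id

end SlowCon

namespace SlowCon

open ONote

/-! ### basic -/

theorem oadd_ne_zero' {a b : ONote} {m : ℕ+} : oadd a m b ≠ 0 := fun h => by cases h

theorem one_eq : (1 : ONote) = oadd 0 1 0 := rfl

theorem fs_inr {o : ONote} {f} (h : fundamentalSequence o = Sum.inr f) (k : ℕ) :
    fs o k = f k := by unfold fs; rw [h]

theorem fs_some {o a : ONote} (h : fundamentalSequence o = Sum.inl (some a)) (k : ℕ) :
    fs o k = a := by unfold fs; rw [h]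

theorem fs_lt {o : ONote} (h : o ≠ 0) (k : ℕ) : fs o k < o := by
  have hp := fundamentalSequence_has_prop o
  unfold fs
  rcases e : fundamentalSequence o with (⟨⟩|a)|f <;> rw [e] at hp
  · exact absurd hp h
  · rw [ONote.lt_def, hp.1]; exact Order.lt_succ _
  · exact (hp.2.1 k).2.1

theorem succPNat_zero' : Nat.succPNat 0 = 1 := rfl

theorem fseq_zero : fundamentalSequence 0 = Sum.inl none := rfl

theorem fseq_one : fundamentalSequence (oadd 0 1 0) = Sum.inl (some 0) := rfl

theorem fseq_tail_some {a b b' : ONote} {m : ℕ+}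
    (hb : fundamentalSequence b = Sum.inl (some b')) :
    fundamentalSequence (oadd a m b) = Sum.inl (some (oadd a m b')) := by
  rw [fundamentalSequence, hb]

theorem fseq_tail_inr {a b : ONote} {m : ℕ+} {g} (hb : fundamentalSequence b = Sum.inr g) :
    fundamentalSequence (oadd a m b) = Sum.inr (fun i => oadd a m (g i)) := by
  rw [fundamentalSequence, hb]

theorem fseq_lim1 {a : ONote} {f} (h : fundamentalSequence a = Sum.inr f) :
    fundamentalSequence (oadd a 1 0) = Sum.inr (fun i => oadd (f i) 1 0) := by
  rw [fundamentalSequence, fseq_zero, h]; rfl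

theorem fseq_limS {a : ONote} {f} (h : fundamentalSequence a = Sum.inr f) (j : ℕ) :
    fundamentalSequence (oadd a (j+1).succPNat 0) =
      Sum.inr (fun i => oadd a j.succPNat (oadd (f i) 1 0)) := by
  rw [fundamentalSequence, fseq_zero, h]; rfl

theorem fseq_succ1 {a a' : ONote} (h : fundamentalSequence a = Sum.inl (some a')) :
    fundamentalSequence (oadd a 1 0) = Sum.inr (fun i => oadd a' i.succPNat 0) := by
  rw [fundamentalSequence, fseq_zero, h]; rfl

theorem fseq_succS {a a' : ONote} (h : fundamentalSequence a = Sum.inl (some a')) (j : ℕ) :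
    fundamentalSequence (oadd a (j+1).succPNat 0) =
      Sum.inr (fun i => oadd a j.succPNat (oadd a' i.succPNat 0)) := by
  rw [fundamentalSequence, fseq_zero, h]; rfl

theorem fseq_nat (j : ℕ) :
    fundamentalSequence (oadd 0 (j+1).succPNat 0) = Sum.inl (some (oadd 0 j.succPNat 0)) := by
  rw [fundamentalSequence, fseq_zero]; rfl

theorem fs_oadd_tail {b : ONote} (hb : b ≠ 0) (a : ONote) (m : ℕ+) (k : ℕ) :
    fs (oadd a m b) k = oadd a m (fs b k) := by
  have hp := fundamentalSequence_has_prop b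
  rcases e : fundamentalSequence b with (⟨⟩|b')|g <;> rw [e] at hp
  · exact absurd hp hb
  · rw [fs_some (fseq_tail_some e), fs_some e]
  · rw [fs_inr (fseq_tail_inr e), fs_inr e]

theorem fs_ne_zero {o : ONote} (h0 : o ≠ 0) (h1 : o ≠ oadd 0 1 0) (k : ℕ) : fs o k ≠ 0 := by
  rcases o with _ | ⟨a, m, b⟩
  · exact absurd rfl h0
  have hpb := fundamentalSequence_has_prop b
  rcases e : fundamentalSequence b with (⟨⟩|b')|g <;> rw [e] at hpb
  · -- b = 0
    subst hpb
    have hm : m = m.natPred.succPNat := (PNat.succPNat_natPred m).symm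
    have hpa := fundamentalSequence_has_prop a
    rcases ea : fundamentalSequence a with (⟨⟩|a')|g <;> rw [ea] at hpa <;>
      rcases em : m.natPred with _ | j
    · subst hpa
      rw [hm, em, succPNat_zero'] at h1
      exact absurd rfl h1
    · subst hpa
      rw [hm, em, fs_some (fseq_nat j)]; exact oadd_ne_zero'
    · rw [hm, em, succPNat_zero', fs_inr (fseq_succ1 ea)]; exact oadd_ne_zero'
    · rw [hm, em, fs_inr (fseq_succS ea j)]; exact oadd_ne_zero'
    · rw [hm, em, succPNat_zero', fs_inr (fseq_lim1 ea)]; exact oadd_ne_zero'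
    · rw [hm, em, fs_inr (fseq_limS ea j)]; exact oadd_ne_zero'
  · rw [fs_some (fseq_tail_some e)]; exact oadd_ne_zero'
  · rw [fs_inr (fseq_tail_inr e)]; exact oadd_ne_zero'

/-! ### descent machinery -/

theorem stepDown_lt {k : ℕ} {a b : ONote} (h : stepDown k a b) : a < b := by
  induction h with
  | single h => rw [h.2]; exact fs_lt h.1 k
  | tail _ h2 ih =>
      have := fs_lt h2.1 k
      rw [← h2.2] at this
      rw [ONote.lt_def] at *
      exact lt_trans ih this

theorem stepDown_ne_zero {k : ℕ} {a b : ONote} (h : stepDown k a b) (ha : a ≠ 0) : b ≠ 0 := by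
  rintro rfl
  have := stepDown_lt h
  rw [ONote.lt_def] at this
  exact absurd this (by simp)

theorem downTo0 (k : ℕ) (t : ONote) (h0 : t ≠ 0) : stepDown k 0 t := by
  by_cases h : fs t k = 0
  · exact Relation.TransGen.single ⟨h0, h.symm⟩
  · have hlt := fs_lt h0 k
    exact Relation.TransGen.tail (downTo0 k (fs t k) h) ⟨h0, rfl⟩
  termination_by t
  decreasing_by exact hlt

theorem downTo1 (k : ℕ) (t : ONote) (h0 : t ≠ 0) (h1 : t ≠ oadd 0 1 0) :
    stepDown k (oadd 0 1 0) t := by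
  by_cases h : fs t k = oadd 0 1 0
  · exact Relation.TransGen.single ⟨h0, h.symm⟩
  · have hlt := fs_lt h0 k
    exact Relation.TransGen.tail (downTo1 k (fs t k) (fs_ne_zero h0 h1 k) h) ⟨h0, rfl⟩
  termination_by t
  decreasing_by exact hlt

theorem stepDown_oadd {k : ℕ} {b b' : ONote} (a : ONote) (m : ℕ+) (h : stepDown k b b') :
    stepDown k (oadd a m b) (oadd a m b') :=
  Relation.TransGen.lift (r := fun x y => y ≠ 0 ∧ x = fs y k) (p := fun x y => y ≠ 0 ∧ x = fs y k)
    (fun x => oadd a m x)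
    (fun _ y hy => ⟨oadd_ne_zero', by rw [hy.2, fs_oadd_tail hy.1]⟩) _ _ h

theorem coeffStep (k : ℕ) {a : ONote} (ha : a ≠ 0) (j : ℕ) :
    stepDown k (oadd a j.succPNat 0) (oadd a (j+1).succPNat 0) := by
  have hpa := fundamentalSequence_has_prop a
  rcases ea : fundamentalSequence a with (⟨⟩|a')|g <;> rw [ea] at hpa
  · exact absurd hpa ha
  · refine Relation.TransGen.tail
      (stepDown_oadd a j.succPNat (downTo0 k (oadd a' k.succPNat 0) oadd_ne_zero'))
      ⟨oadd_ne_zero', ?_⟩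
    rw [fs_inr (fseq_succS ea j)]
  · refine Relation.TransGen.tail
      (stepDown_oadd a j.succPNat (downTo0 k (oadd (g k) 1 0) oadd_ne_zero'))
      ⟨oadd_ne_zero', ?_⟩
    rw [fs_inr (fseq_limS ea j)]

theorem coeffDescent (k : ℕ) {a : ONote} (ha : a ≠ 0) {i j : ℕ} (h : i < j) :
    stepDown k (oadd a i.succPNat 0) (oadd a j.succPNat 0) := by
  induction h with
  | refl => exact coeffStep k ha i
  | step _ ih => exact Relation.TransGen.trans ih (coeffStep k ha _)

theorem natDescent (k : ℕ) {i j : ℕ} (h : i < j) :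
    stepDown k (oadd 0 i.succPNat 0) (oadd 0 j.succPNat 0) := by
  induction h with
  | refl => exact Relation.TransGen.single ⟨oadd_ne_zero', (fs_some (fseq_nat i) k).symm⟩
  | step _ ih =>
      exact Relation.TransGen.tail ih ⟨oadd_ne_zero', (fs_some (fseq_nat _) k).symm⟩

theorem expStep {k : ℕ} (hk : 1 ≤ k) {y : ONote} (hy : y ≠ 0) (hy' : fs y k ≠ 0) :
    stepDown k (oadd (fs y k) 1 0) (oadd y 1 0) := by
  have hpy := fundamentalSequence_has_prop y
  rcases ey : fundamentalSequence y with (⟨⟩|a')|g <;> rw [ey] at hpy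
  · exact absurd hpy hy
  · rw [fs_some ey] at hy' ⊢
    refine Relation.TransGen.tail
      ((show oadd a' 1 0 = oadd a' (Nat.succPNat 0) 0 from rfl) ▸ coeffDescent k hy' hk)
      ⟨oadd_ne_zero', ?_⟩
    rw [fs_inr (fseq_succ1 ey)]
  · rw [fs_inr ey]
    exact Relation.TransGen.single ⟨oadd_ne_zero', by rw [fs_inr (fseq_lim1 ey)]⟩

theorem expLift {k : ℕ} (hk : 1 ≤ k) {b a : ONote} (hb : b ≠ 0) (h : stepDown k b a) :
    stepDown k (oadd b 1 0) (oadd a 1 0) := by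
  induction h with
  | single h => exact h.2 ▸ expStep hk h.1 (h.2 ▸ hb)
  | tail h1 h2 ih =>
      have hc := stepDown_ne_zero h1 hb
      exact Relation.TransGen.trans ih (h2.2 ▸ expStep hk h2.1 (h2.2 ▸ hc))

/-! ### towers -/

theorem wtower_succ (n : ℕ) : wtower (n + 1) = oadd (wtower n) 1 0 := rfl

theorem wtower_ne_zero : ∀ n, wtower n ≠ 0
  | 0 => fun h => by cases h
  | n + 1 => oadd_ne_zero'

theorem wfs : ∀ m, ∃ f, fundamentalSequence (wtower (m + 1)) = Sum.inr f ∧ ∀ i, f i ≠ 0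
  | 0 => ⟨_, fseq_succ1 (fseq_one), fun _ => oadd_ne_zero'⟩
  | m + 1 => by
      obtain ⟨f, hf, hne⟩ := wfs m
      exact ⟨_, fseq_lim1 hf, fun _ => oadd_ne_zero'⟩

def wsucc : ℕ → ONote
  | 0 => oadd 0 2 0
  | m + 1 => oadd (wtower m) 1 (oadd 0 1 0)

theorem wsucc_ne_zero : ∀ m, wsucc m ≠ 0
  | 0 => oadd_ne_zero'
  | _ + 1 => oadd_ne_zero'

theorem two_eq_succPNat : (2 : ℕ+) = Nat.succPNat 1 := rfl
theorem three_eq_succPNat : (3 : ℕ+) = Nat.succPNat 2 := rfl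

theorem fseq_wsucc : ∀ m, fundamentalSequence (wsucc m) = Sum.inl (some (wtower m))
  | 0 => by
      have := fseq_nat 0
      rwa [show ((0:ℕ)+1).succPNat = (2:ℕ+) from rfl,
        show (Nat.succPNat 0) = (1:ℕ+) from rfl] at this
  | m + 1 => fseq_tail_some fseq_one

theorem wtower_add_one : ∀ m, wtower (m + 1) + 1 = wsucc (m + 1)
  | 0 => rfl
  | _ + 1 => rfl

theorem two_down (k : ℕ) (hk : 1 ≤ k) (m : ℕ) :
    stepDown k (oadd (wtower m) 1 (oadd 0 1 0)) (oadd (wtower m) 2 0) := by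
  rcases m with _ | j
  · -- wtower 0 = 1
    refine Relation.TransGen.tail
      (stepDown_oadd (wtower 0) 1 (downTo1 k (oadd 0 k.succPNat 0) oadd_ne_zero' ?_))
      ⟨oadd_ne_zero', ?_⟩
    · intro h
      rw [ONote.oadd.injEq] at h
      have hk0 : k = 0 := congrArg PNat.natPred h.2.1
      omega
    · rw [two_eq_succPNat, fs_inr (fseq_succS (a := wtower 0) fseq_one 0)]
      rfl
  · obtain ⟨f, hf, hne⟩ := wfs j
    refine Relation.TransGen.tail
      (stepDown_oadd (wtower (j+1)) 1 (downTo1 k (oadd (f k) 1 0) oadd_ne_zero' ?_))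
      ⟨oadd_ne_zero', ?_⟩
    · intro h
      rw [ONote.oadd.injEq] at h
      exact hne k h.1
    · rw [two_eq_succPNat, fs_inr (fseq_limS hf 0)]
      rfl

theorem tlem (k : ℕ) (hk : 2 ≤ k) : ∀ m, stepDown k (wsucc m) (wtower (m + 1))
  | 0 => by
      refine Relation.TransGen.tail
        ((show wsucc 0 = oadd 0 (Nat.succPNat 1) 0 from rfl) ▸ natDescent k (show 1 < k from hk))
        ⟨oadd_ne_zero', ?_⟩
      rw [show wtower 1 = oadd (wtower 0) 1 0 from rfl, fs_inr (fseq_succ1 (a := wtower 0) (a' := 0) fseq_one)]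
  | m + 1 => by
      have hk1 : 1 ≤ k := le_trans one_le_two hk
      have A1 : stepDown k (oadd (wsucc m) 1 0) (oadd (wtower (m+1)) 1 0) :=
        expLift hk1 (wsucc_ne_zero m) (tlem k hk m)
      have A2 : fs (oadd (wsucc m) 1 0) k = oadd (wtower m) k.succPNat 0 :=
        fs_inr (fseq_succ1 (fseq_wsucc m)) k
      have A3 : stepDown k (oadd (wtower m) (Nat.succPNat 1) 0) (oadd (wtower m) k.succPNat 0) :=
        coeffDescent k (wtower_ne_zero m) hk
      have A4 := two_down k hk1 m
      have A5 : stepDown k (oadd (wtower m) 1 (oadd 0 1 0)) (oadd (wsucc m) 1 0) :=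
        Relation.TransGen.tail
          (Relation.TransGen.trans A4 (two_eq_succPNat ▸ A3)) ⟨oadd_ne_zero', A2.symm⟩
      exact Relation.TransGen.trans A5 A1

theorem three_eq : (3 : ℕ+) = Nat.succPNat (1 + 1) := rfl


end SlowCon

open SlowCon ONote in
/-- for `x ≥ 1`,
`ω_{x+3} = ω^{ω_{x+2}} >_{x+2} ω^{ω_{x+1}+1} >_{x+2} ω^{ω_{x+1}}·3 >_{x+2} ω_{x+2}·2 + 1`. -/
theorem stmt5 : ∀ x : ℕ, 1 ≤ x →
    SlowCon.stepDown (x + 2) (ONote.oadd (SlowCon.wtower (x + 1) + 1) 1 0)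
      (SlowCon.wtower (x + 3)) ∧
    SlowCon.stepDown (x + 2) (ONote.oadd (SlowCon.wtower (x + 1)) 3 0)
      (ONote.oadd (SlowCon.wtower (x + 1) + 1) 1 0) ∧
    SlowCon.stepDown (x + 2) (ONote.oadd (SlowCon.wtower (x + 1)) 2 (ONote.oadd 0 1 0))
      (ONote.oadd (SlowCon.wtower (x + 1)) 3 0) := by
  intro x hx
  have hk : 2 ≤ x + 2 := by omega
  have hk1 : 1 ≤ x + 2 := by omega
  refine ⟨?_, ?_, ?_⟩
  · rw [wtower_add_one]
    exact expLift hk1 (wsucc_ne_zero (x+1)) (tlem (x+2) hk (x+1))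
  · rw [wtower_add_one]
    refine Relation.TransGen.tail
      (three_eq_succPNat ▸ coeffDescent (x+2) (wtower_ne_zero (x+1)) (show 2 < x + 2 by omega))
      ⟨oadd_ne_zero', ?_⟩
    rw [fs_inr (fseq_succ1 (fseq_wsucc (x+1)))]
  · obtain ⟨f, hf, hne⟩ := wfs x
    refine Relation.TransGen.tail
      (stepDown_oadd (wtower (x+1)) 2
        (downTo1 (x+2) (oadd (f (x+2)) 1 0) oadd_ne_zero' ?_))
      ⟨oadd_ne_zero', ?_⟩
    · intro h
      rw [ONote.oadd.injEq] at h
      exact hne (x+2) h.1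
    · rw [three_eq, fs_inr (fseq_limS hf 1)]
      rfl
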